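/- arXiv:1612.02683 — 5 statements merged into one kernel-verified Lean document; each statement's English description precedes it below -/
import Mathlib

section
/- Let C(c,t) be the cell condition α < ord(t−c) < β ∧ ac_m(t−c) = ac_m(λ) over ℚ_p with λ ≠ 0, and let ρ_max be the largest γ with α < γ < β and γ ≡ ord λ mod n realized by the cell (assume the cell fiber is nonempty). If c' ∈ ℚ_p satisfies ord(c − c') ≥ ρ_max + m, then for all t, C(c,t) holds if and only if C(c',t) holds. -/
open scoped Classical

namespace PaperCD

variable (p : ℕ) [hp : Fact p.Prime]

/-- The unit part of a nonzero `p`-adic number: `x * p^(-ord x)`, an element of `ℤ_[p]`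
of norm one; `0` is sent to `0`. -/
noncomputable def unitPart (x : ℚ_[p]) : ℤ_[p] :=
  if h : x = 0 then 0 else
    ⟨x * (p : ℚ_[p]) ^ (-x.valuation), by
      have hp0 : (p : ℝ) ≠ 0 := by exact_mod_cast hp.out.ne_zero
      have hx : ‖x * (p : ℚ_[p]) ^ (-x.valuation)‖ = 1 := by
        rw [norm_mul, Padic.norm_p_zpow, Padic.norm_eq_zpow_neg_valuation h, neg_neg,
          ← zpow_add₀ hp0]
        simp
      exact le_of_eq hx⟩

/-- The angular component map of level `m`: `ac_m(x) = x·p^(-ord x) mod p^m`,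
with `ac m 0 = 0`. -/
noncomputable def ac (m : ℕ) (x : ℚ_[p]) : ZMod (p ^ m) :=
  PadicInt.toZModPow m (unitPart p x)

/-- The closed ball of (valuative) radius `γ` around `a` in `ℚ_[p]`:
`{t | ord (t - a) ≥ γ}`. -/
def pball (γ : ℤ) (a : ℚ_[p]) : Set ℚ_[p] := {t | ‖t - a‖ ≤ (p : ℝ) ^ (-γ)}

lemma key (m : ℕ) (hm : 1 ≤ m) (y x : ℚ_[p]) (hy : y ≠ 0)
    (hx : ‖x‖ ≤ (p : ℝ) ^ (-(y.valuation + m))) :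
    y + x ≠ 0 ∧ (y + x).valuation = y.valuation ∧ ac p m (y + x) = ac p m y := by
  have hp1 : 1 < (p : ℝ) := by exact_mod_cast hp.out.one_lt
  have hp0 : (0:ℝ) < p := by linarith
  have hylt : ‖x‖ < ‖y‖ := by
    rw [Padic.norm_eq_zpow_neg_valuation hy]
    refine lt_of_le_of_lt hx ?_
    apply zpow_lt_zpow_right₀ hp1
    omega
  have hnorm : ‖y + x‖ = ‖y‖ := by
    rcases eq_or_ne ‖y‖ ‖x‖ with h | h
    · exact absurd h.symm (ne_of_lt hylt)
    · rw [Padic.add_eq_max_of_ne h, max_eq_left hylt.le]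
  have hne : y + x ≠ 0 := by
    intro h; rw [h, norm_zero] at hnorm
    exact hy (norm_eq_zero.mp hnorm.symm)
  have hval : (y + x).valuation = y.valuation := by
    have h1 := Padic.norm_eq_zpow_neg_valuation hne
    have h2 := Padic.norm_eq_zpow_neg_valuation hy
    rw [hnorm, h2] at h1
    have := zpow_right_injective₀ hp0 (ne_of_gt hp1) h1.symm
    omega
  refine ⟨hne, hval, ?_⟩
  unfold ac
  obtain ⟨h1, e1⟩ : ∃ h, unitPart p (y+x) = (⟨(y+x) * (p:ℚ_[p])^(-(y+x).valuation), h⟩ : ℤ_[p]) :=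
    ⟨_, dif_neg hne⟩
  obtain ⟨h2, e2⟩ : ∃ h, unitPart p y = (⟨y * (p:ℚ_[p])^(-y.valuation), h⟩ : ℤ_[p]) :=
    ⟨_, dif_neg hy⟩
  rw [e1, e2]
  set a : ℤ_[p] := ⟨(y+x) * (p : ℚ_[p]) ^ (-(y+x).valuation), _⟩ with ha
  set b : ℤ_[p] := ⟨y * (p : ℚ_[p]) ^ (-y.valuation), _⟩ with hb
  have hsub : ((a - b : ℤ_[p]) : ℚ_[p]) = x * (p : ℚ_[p]) ^ (-y.valuation) := by
    rw [PadicInt.coe_sub, ha, hb]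
    show (y + x) * _ - y * _ = _
    rw [hval]
    ring
  have hnsub : ‖a - b‖ ≤ (p : ℝ) ^ (-(m:ℤ)) := by
    rw [← PadicInt.padic_norm_e_of_padicInt, hsub, norm_mul, Padic.norm_p_zpow, neg_neg]
    calc ‖x‖ * (p:ℝ) ^ (y.valuation)
        ≤ (p : ℝ) ^ (-(y.valuation + m)) * (p:ℝ) ^ (y.valuation) := by
          apply mul_le_mul_of_nonneg_right hx (zpow_nonneg hp0.le _)
      _ = (p : ℝ) ^ (-(m:ℤ)) := by
          rw [← zpow_add₀ (ne_of_gt hp0)]; ring_nf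
  have : a - b ∈ RingHom.ker (PadicInt.toZModPow (p := p) m) := by
    rw [PadicInt.ker_toZModPow]
    exact (PadicInt.norm_le_pow_iff_mem_span_pow _ m).mp hnsub
  rw [RingHom.mem_ker, map_sub, sub_eq_zero] at this
  exact this

lemma val_neg (x : ℚ_[p]) : (-x).valuation = x.valuation := by
  rcases eq_or_ne x 0 with rfl | hx
  · simp
  have hp1 : 1 < (p : ℝ) := by exact_mod_cast hp.out.one_lt
  have h := Padic.norm_eq_zpow_neg_valuation (neg_ne_zero.mpr hx)
  rw [norm_neg, Padic.norm_eq_zpow_neg_valuation hx] at h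
  have := zpow_right_injective₀ (by linarith : (0:ℝ) < p) (ne_of_gt hp1) h.symm
  omega

lemma normle (γ : ℤ) (x : ℚ_[p]) (h : x = 0 ∨ γ ≤ x.valuation) : ‖x‖ ≤ (p : ℝ) ^ (-γ) := by
  have hp1 : (1:ℝ) ≤ (p : ℝ) := by exact_mod_cast hp.out.one_lt.le
  rcases h with rfl | h
  · rw [norm_zero]; exact zpow_nonneg (by positivity) _
  · rcases eq_or_ne x 0 with rfl | hx
    · rw [norm_zero]; exact zpow_nonneg (by positivity) _
    · rw [Padic.norm_eq_zpow_neg_valuation hx]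
      exact zpow_le_zpow_right₀ hp1 (by omega)

end PaperCD

open PaperCD

/-- The `1`-cell condition `α < ord (t - c) < β ∧ t - c ∈ lam · Q_{n,m}`. -/
def cellCond (p : ℕ) [Fact p.Prime] (n m : ℕ) (α β : ℤ) (lam c t : ℚ_[p]) : Prop :=
  t ≠ c ∧ α < (t - c).valuation ∧ (t - c).valuation < β ∧
    (n : ℤ) ∣ ((t - c).valuation - lam.valuation) ∧ ac p m (t - c) = ac p m lam

theorem cell_center_can_move_in_ball (p n m : ℕ) [Fact p.Prime] (hn : 1 ≤ n) (hm : 1 ≤ m)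
    (α β ρmax : ℤ) (lam c c' : ℚ_[p]) (hlam : lam ≠ 0)
    (hreal : ∃ t, cellCond p n m α β lam c t ∧ (t - c).valuation = ρmax)
    (hmax : ∀ t, cellCond p n m α β lam c t → (t - c).valuation ≤ ρmax)
    (hc' : c = c' ∨ ρmax + m ≤ (c - c').valuation) :
    ∀ t, cellCond p n m α β lam c t ↔ cellCond p n m α β lam c' t := by
  rcases hc' with rfl | hball
  · intro t; rfl
  intro t
  constructor
  · rintro ⟨htc, hα, hβ, hdvd, hac⟩
    have hle : (t - c).valuation ≤ ρmax := hmax t ⟨htc, hα, hβ, hdvd, hac⟩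
    have hy : t - c ≠ 0 := sub_ne_zero.mpr htc
    have hxnorm : ‖c - c'‖ ≤ (p : ℝ) ^ (-((t - c).valuation + m)) :=
      normle p _ _ (Or.inr (by
        rcases eq_or_ne c c' with rfl | hcc
        · simp at hball ⊢; omega
        · omega))
    obtain ⟨hne, hval, hacnew⟩ := key p m hm (t - c) (c - c') hy hxnorm
    rw [show t - c + (c - c') = t - c' by ring] at hne hval hacnew
    exact ⟨sub_ne_zero.mp hne, by rw [hval]; exact hα, by rw [hval]; exact hβ,
      by rw [hval]; exact hdvd, hacnew.trans hac⟩
  · rintro ⟨htc', hα, hβ, hdvd, hac⟩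
    have heq : c + (t - c') - c = t - c' := by ring
    have hcell : cellCond p n m α β lam c (c + (t - c')) := by
      refine ⟨?_, by rw [heq]; exact hα, by rw [heq]; exact hβ,
        by rw [heq]; exact hdvd, by rw [heq]; exact hac⟩
      intro h
      have h0 : t - c' = 0 := by linear_combination h
      exact htc' (sub_eq_zero.mp h0)
    have hle : (t - c').valuation ≤ ρmax := by
      have := hmax _ hcell; rwa [heq] at this
    have hy : t - c' ≠ 0 := sub_ne_zero.mpr htc'
    have hxnorm : ‖c' - c‖ ≤ (p : ℝ) ^ (-((t - c').valuation + m)) :=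
      normle p _ _ (Or.inr (by
        rcases eq_or_ne c c' with rfl | hcc
        · simp at hball ⊢; omega
        · have : (c' - c).valuation = (c - c').valuation := by
            rw [show c' - c = -(c - c') by ring, val_neg]
          omega))
    obtain ⟨hne, hval, hacnew⟩ := key p m hm (t - c') (c' - c) hy hxnorm
    rw [show t - c' + (c' - c) = t - c by ring] at hne hval hacnew
    exact ⟨sub_ne_zero.mp hne, by rw [hval]; exact hα, by rw [hval]; exact hβ,
      by rw [hval]; exact hdvd, hacnew.trans hac⟩
end

section
/- Let σ₁, σ₂ ∈ ℚ_p and let C^{σᵢ} = {t | α < ord(t−σᵢ) < β ∧ ac_m(t−σᵢ) = ac_m(λ)} with λ ≠ 0. If ord(σ₁ − σ₂) ≤ α, then C^{σ₁} ∩ C^{σ₂} = ∅. -/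
open scoped Classical

open PaperCD

private lemma val_neg' {p : ℕ} [Fact p.Prime] (x : ℚ_[p]) (hx : x ≠ 0) :
    (-x).valuation = x.valuation := by
  have h := Padic.valuation_mul (x := (-1 : ℚ_[p])) (y := x) (by norm_num) hx
  have h1 : ((-1 : ℚ_[p])).valuation = 0 := by
    have : ((-1 : ℤ) : ℚ_[p]) = -1 := by push_cast; ring
    rw [← this, Padic.valuation_intCast]
    simp [padicValInt]
  simpa [h1] using h

theorem cells_disjoint_of_branching_below (p m : ℕ) [Fact p.Prime] (hm : 1 ≤ m)
    (α β : ℤ) (σ₁ σ₂ lam : ℚ_[p]) (hlam : lam ≠ 0)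
    (hne : σ₁ ≠ σ₂) (hbr : (σ₁ - σ₂).valuation ≤ α) :
    {t : ℚ_[p] | t ≠ σ₁ ∧ α < (t - σ₁).valuation ∧ (t - σ₁).valuation < β ∧
        ac p m (t - σ₁) = ac p m lam} ∩
      {t : ℚ_[p] | t ≠ σ₂ ∧ α < (t - σ₂).valuation ∧ (t - σ₂).valuation < β ∧
        ac p m (t - σ₂) = ac p m lam} = ∅ := by
  ext t
  simp only [Set.mem_inter_iff, Set.mem_setOf_eq, Set.mem_empty_iff_false, iff_false]
  rintro ⟨⟨ht1, h1, -, -⟩, ⟨ht2, h2, -, -⟩⟩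
  have hsum : (t - σ₂) + (σ₁ - t) = σ₁ - σ₂ := by ring
  have hne' : (σ₁ - σ₂ : ℚ_[p]) ≠ 0 := sub_ne_zero.mpr hne
  have hkey := Padic.le_valuation_add (x := t - σ₂) (y := σ₁ - t) (by rw [hsum]; exact hne')
  rw [hsum] at hkey
  have hst : (σ₁ - t) = -(t - σ₁) := by ring
  rw [hst, val_neg' _ (sub_ne_zero.mpr ht1)] at hkey
  have : α < (σ₁ - σ₂).valuation := lt_of_lt_of_le (lt_min h2 h1) hkey
  exact absurd hbr (not_le.mpr this)
end

section
/- Let Z ⊆ ℚ_p be a set which is a union of infinitely many pairwise disjoint closed balls of a common radius δ ∈ ℤ, each maximal with respect to inclusion in Z. Then Z is not a finite union of sets of the form {t | α ◻₁ ord(t−c) ◻₂ β ∧ t−c ∈ λ·Q_{n,m}} (semi-algebraic cells). Equivalently: a finite union of such cells contains only finitely many maximal balls of any fixed radius δ, unless it contains a ball of radius < δ around one of them. -/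
open scoped Classical

open PaperCD

/-- `x ∈ lam · Q_{n,m}`: for `lam = 0` this means `x = 0`; for `lam ≠ 0` it means
`x ≠ 0`, `ord x ≡ ord lam mod n` and `ac_m x = ac_m lam`. -/
def memScaledQ (p : ℕ) [Fact p.Prime] (n m : ℕ) (lam x : ℚ_[p]) : Prop :=
  (lam = 0 ∧ x = 0) ∨
  (lam ≠ 0 ∧ x ≠ 0 ∧ (n : ℤ) ∣ (x.valuation - lam.valuation) ∧ ac p m x = ac p m lam)

/-- A semi-algebraic cell `{t | α ◻₁ ord (t - c) ◻₂ β ∧ t - c ∈ lam · Q_{n,m}}`,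
where the booleans indicate whether the bounds are present. -/
def IsCell (p : ℕ) [Fact p.Prime] (X : Set ℚ_[p]) : Prop :=
  ∃ (n m : ℕ) (c lam : ℚ_[p]) (α β : ℤ) (b₁ b₂ : Bool), 1 ≤ n ∧ 1 ≤ m ∧
    X = {t : ℚ_[p] |
      (b₁ = true → t ≠ c → α < (t - c).valuation) ∧
      (b₂ = true → t ≠ c ∧ (t - c).valuation < β) ∧
      memScaledQ p n m lam (t - c)}


section Aux

variable {p : ℕ} [hp : Fact p.Prime]

private lemma valEqOfNormEq {x y : ℚ_[p]} (hx : x ≠ 0) (hy : y ≠ 0) (h : ‖x‖ = ‖y‖) :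
    x.valuation = y.valuation := by
  rw [Padic.norm_eq_zpow_neg_valuation hx, Padic.norm_eq_zpow_neg_valuation hy] at h
  have hp1 : (1:ℝ) < p := by exact_mod_cast (Fact.out : p.Prime).one_lt
  have := zpow_right_injective₀ (by positivity) hp1.ne' h
  omega

private lemma zpowAux_le {a b : ℤ} (h : a ≤ b) : (p:ℝ)^(-b) ≤ (p:ℝ)^(-a) := by
  have hp1 : (1:ℝ) ≤ p := by exact_mod_cast (Fact.out : p.Prime).one_le
  exact zpow_le_zpow_right₀ hp1 (by omega)

private lemma zpowAux_lt {a b : ℤ} (h : a < b) : (p:ℝ)^(-b) < (p:ℝ)^(-a) := by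
  have hp1 : (1:ℝ) < p := by exact_mod_cast (Fact.out : p.Prime).one_lt
  exact zpow_lt_zpow_right₀ hp1 (by omega)

private lemma toZModPowEq {n : ℕ} {x y : ℤ_[p]} (h : ‖x - y‖ ≤ (p:ℝ)^(-(n:ℤ))) :
    PadicInt.toZModPow n x = PadicInt.toZModPow n y := by
  have := (PadicInt.norm_le_pow_iff_mem_span_pow (x-y) n).mp h
  rw [← PadicInt.ker_toZModPow, RingHom.mem_ker, map_sub, sub_eq_zero] at this
  exact this

private lemma acEqOfClose (m : ℕ) {x y : ℚ_[p]} (hx : x ≠ 0) (hy : y ≠ 0)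
    (hv : x.valuation = y.valuation)
    (h : ‖x - y‖ ≤ (p:ℝ)^(-(x.valuation + m))) : ac p m x = ac p m y := by
  have hp0 : (p:ℝ) ≠ 0 := by exact_mod_cast (Fact.out : p.Prime).ne_zero
  unfold ac
  apply toZModPowEq
  have hcx : (unitPart p x : ℚ_[p]) = x * (p : ℚ_[p]) ^ (-x.valuation) := by
    rw [unitPart]; exact congrArg (fun z : ℤ_[p] => (z : ℚ_[p])) (dif_neg hx)
  have hcy : (unitPart p y : ℚ_[p]) = y * (p : ℚ_[p]) ^ (-y.valuation) := by
    rw [unitPart]; exact congrArg (fun z : ℤ_[p] => (z : ℚ_[p])) (dif_neg hy)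
  rw [PadicInt.norm_def]
  push_cast
  rw [hcx, hcy, ← hv, ← sub_mul, norm_mul, Padic.norm_p_zpow, neg_neg]
  calc ‖x - y‖ * (p:ℝ)^(x.valuation) ≤ (p:ℝ)^(-(x.valuation+m)) * (p:ℝ)^(x.valuation) :=
        mul_le_mul_of_nonneg_right h (by positivity)
    _ = (p:ℝ)^(-(m:ℤ)) := by rw [← zpow_add₀ hp0]; congr 1; ring

private lemma cellBall {n m : ℕ} (hm : 1 ≤ m) {c lam : ℚ_[p]} (hlam : lam ≠ 0)
    {α β : ℤ} {b₁ b₂ : Bool} {t : ℚ_[p]}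
    (ht : (b₁ = true → t ≠ c → α < (t - c).valuation) ∧
      (b₂ = true → t ≠ c ∧ (t - c).valuation < β) ∧ memScaledQ p n m lam (t - c))
    {t' : ℚ_[p]} (ht' : ‖t' - t‖ ≤ (p:ℝ) ^ (-((t - c).valuation + m))) :
    (b₁ = true → t' ≠ c → α < (t' - c).valuation) ∧
      (b₂ = true → t' ≠ c ∧ (t' - c).valuation < β) ∧ memScaledQ p n m lam (t' - c) := by
  obtain ⟨h1, h2, h3⟩ := ht
  rcases h3 with ⟨h0, -⟩ | ⟨-, hx, hdvd, hac⟩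
  · exact absurd h0 hlam
  have htc : t ≠ c := sub_ne_zero.mp hx
  have hnorm_lt : ‖t' - t‖ < ‖t - c‖ := by
    rw [Padic.norm_eq_zpow_neg_valuation hx]
    exact lt_of_le_of_lt ht' (zpowAux_lt (by omega))
  have hnorm_eq : ‖t' - c‖ = ‖t - c‖ := by
    have heq : t' - c = (t - c) + (t' - t) := by ring
    rw [heq, Padic.add_eq_max_of_ne hnorm_lt.ne', max_eq_left hnorm_lt.le]
  have hne : t' - c ≠ 0 := by
    rw [← norm_ne_zero_iff, hnorm_eq, norm_ne_zero_iff]; exact hx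
  have hveq : (t' - c).valuation = (t - c).valuation := valEqOfNormEq hne hx hnorm_eq
  have hac' : ac p m (t' - c) = ac p m (t - c) := by
    apply acEqOfClose m hne hx hveq
    rw [hveq]
    have heq : (t' - c) - (t - c) = t' - t := by ring
    rw [heq]; exact ht'
  refine ⟨fun hb _ => ?_, fun hb => ?_, Or.inr ⟨hlam, hne, ?_, ?_⟩⟩
  · rw [hveq]; exact h1 hb htc
  · exact ⟨sub_ne_zero.mp hne, by rw [hveq]; exact (h2 hb).2⟩
  · rw [hveq]; exact hdvd
  · exact hac'.trans hac

private lemma sepFinite (γ : ℤ) (m : ℕ) (c : ℚ_[p]) (S : Set ℚ_[p])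
    (hb : ∀ a ∈ S, ‖a - c‖ ≤ (p:ℝ)^(-γ))
    (hsep : ∀ a ∈ S, ∀ b ∈ S, ‖a - b‖ ≤ (p:ℝ)^(-(γ+m)) → a = b) : S.Finite := by
  classical
  have hp0 : (p:ℝ) ≠ 0 := by exact_mod_cast (Fact.out : p.Prime).ne_zero
  have hnorm : ∀ a ∈ S, ‖(a - c) * (p:ℚ_[p])^(-γ)‖ ≤ 1 := by
    intro a ha
    rw [norm_mul, Padic.norm_p_zpow, neg_neg]
    calc ‖a - c‖ * (p:ℝ)^γ ≤ (p:ℝ)^(-γ) * (p:ℝ)^γ :=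
          mul_le_mul_of_nonneg_right (hb a ha) (by positivity)
      _ = 1 := by rw [← zpow_add₀ hp0]; simp
  set f : ℚ_[p] → ZMod (p^m) := fun a =>
    if h : ‖(a - c) * (p:ℚ_[p])^(-γ)‖ ≤ 1 then PadicInt.toZModPow m ⟨_, h⟩ else 0 with hf
  apply Set.Finite.of_finite_image (Set.toFinite (f '' S))
  intro a ha b hbS hfab
  simp only [hf] at hfab
  rw [dif_pos (hnorm a ha), dif_pos (hnorm b hbS)] at hfab
  apply hsep a ha b hbS
  set xa : ℤ_[p] := ⟨(a-c)*(p:ℚ_[p])^(-γ), hnorm a ha⟩ with hxa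
  set xb : ℤ_[p] := ⟨(b-c)*(p:ℚ_[p])^(-γ), hnorm b hbS⟩ with hxb
  have hker : ‖xa - xb‖ ≤ (p:ℝ)^(-(m:ℤ)) :=
    (PadicInt.norm_le_pow_iff_mem_span_pow _ m).mpr (by
      rw [← PadicInt.ker_toZModPow, RingHom.mem_ker, map_sub, hfab, sub_self])
  rw [PadicInt.norm_def] at hker
  have hcoe : ((xa - xb : ℤ_[p]) : ℚ_[p]) = (a - b) * (p:ℚ_[p])^(-γ) := by
    push_cast
    show (a-c)*(p:ℚ_[p])^(-γ) - (b-c)*(p:ℚ_[p])^(-γ) = (a - b) * (p:ℚ_[p])^(-γ)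
    ring
  rw [hcoe, norm_mul, Padic.norm_p_zpow, neg_neg] at hker
  calc ‖a - b‖ = ‖a - b‖ * (p:ℝ)^γ * (p:ℝ)^(-γ) := by
        rw [mul_assoc, ← zpow_add₀ hp0]; simp
    _ ≤ (p:ℝ)^(-(m:ℤ)) * (p:ℝ)^(-γ) := mul_le_mul_of_nonneg_right hker (by positivity)
    _ = (p:ℝ)^(-(γ+m)) := by rw [← zpow_add₀ hp0]; congr 1; ring

end Aux

theorem infinitely_many_maximal_balls_not_finite_union_of_cells (p : ℕ) [Fact p.Prime]
    (δ : ℤ) (T : Set ℚ_[p]) (hT : T.Infinite)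
    (hdisj : T.Pairwise fun a b => Disjoint (pball p δ a) (pball p δ b))
    (Z : Set ℚ_[p]) (hZ : Z = ⋃ a ∈ T, pball p δ a)
    (hmaxml : ∀ a ∈ T, ∀ δ' : ℤ, δ' < δ → ∀ a' : ℚ_[p],
      a ∈ pball p δ' a' → ¬ pball p δ' a' ⊆ Z) :
    ¬ ∃ (k : ℕ) (C : Fin k → Set ℚ_[p]),
        (∀ i, IsCell p (C i)) ∧ Z = ⋃ i, C i := by
  have hp1 : (1:ℝ) ≤ p := by exact_mod_cast (Fact.out : p.Prime).one_le
  rintro ⟨k, C, hcells, hunion⟩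
  have hself : ∀ (γ : ℤ) (a : ℚ_[p]), a ∈ pball p γ a := by
    intro γ a
    show ‖a - a‖ ≤ (p:ℝ)^(-γ)
    rw [sub_self, norm_zero]
    positivity
  have hTZ : T ⊆ Z := by
    intro a ha
    rw [hZ]
    exact Set.mem_biUnion ha (hself δ a)
  have hex : ∃ i, (T ∩ C i).Infinite := by
    by_contra h
    push_neg at h
    have hsub : T ⊆ ⋃ i, (T ∩ C i) := by
      intro a ha
      have : a ∈ ⋃ i, C i := hunion ▸ hTZ ha
      obtain ⟨i, hi⟩ := Set.mem_iUnion.mp this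
      exact Set.mem_iUnion.mpr ⟨i, ha, hi⟩
    exact hT (Set.Finite.subset (Set.finite_iUnion fun i => h i) hsub)
  obtain ⟨i, hSinf⟩ := hex
  obtain ⟨n, m, c, lam, α, β, b₁, b₂, hn, hm, hCi⟩ := hcells i
  by_cases hlam : lam = 0
  · apply hSinf
    apply Set.Finite.subset (Set.finite_singleton c)
    rintro a ⟨-, haC⟩
    rw [hCi] at haC
    rcases haC.2.2 with ⟨-, h0⟩ | ⟨hl, -⟩
    · exact sub_eq_zero.mp h0
    · exact absurd hlam hl
  · apply hSinf
    apply sepFinite (δ - m) m c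
    · rintro a ⟨haT, haC⟩
      rw [hCi] at haC
      have haC' := haC
      rcases haC.2.2 with ⟨h0, -⟩ | ⟨-, hx, -, -⟩
      · exact absurd h0 hlam
      have hb : pball p ((a - c).valuation + m) a ⊆ C i := by
        rw [hCi]
        intro t' ht'
        exact cellBall hm hlam haC' ht'
      have hbZ : pball p ((a - c).valuation + m) a ⊆ Z :=
        hb.trans (hunion ▸ Set.subset_iUnion C i)
      have hnlt : ¬ ((a - c).valuation + m < δ) := fun hlt =>
        hmaxml a haT _ hlt a (hself _ a) hbZ
      rw [Padic.norm_eq_zpow_neg_valuation hx]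
      exact zpowAux_le (by omega)
    · rintro a ⟨haT, -⟩ b ⟨hbT, -⟩ hab
      by_contra hne
      have hd := hdisj haT hbT hne
      have hba : b ∈ pball p δ a := by
        show ‖b - a‖ ≤ (p:ℝ)^(-δ)
        rw [← norm_neg]
        have : -(b - a) = a - b := by ring
        rw [this]
        calc ‖a - b‖ ≤ (p:ℝ)^(-(δ - m + m)) := hab
          _ = (p:ℝ)^(-δ) := by congr 1; ring
      exact Set.disjoint_left.mp hd hba (hself δ b)
end

section
/- Let C^{σ} = {t ∈ ℚ_p | ord(t−σ) = γ ∧ ac_m(t−σ) = ac_m(λ)} be a small cell with λ ≠ 0 and r := ord(λ−1) < m, and assume ord λ = 0. Define b ∈ ℚ_p with ord b = γ + r and ac_m(b) = ac_m(Λ(λ)), where Λ(λ) = λ − 1 if ac_1(λ) ≠ 1 and Λ(λ) = (λ−1)/p^r otherwise. Then C^{σ} = {t ∈ ℚ_p | ord(t−(σ+b)) = γ ∧ ac_m(t−(σ+b)) = 1}. -/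
open scoped Classical

namespace PaperCD

variable (p : ℕ) [hp : Fact p.Prime]

lemma unitPart_coe (x : ℚ_[p]) (hx : x ≠ 0) :
    (unitPart p x : ℚ_[p]) = x * (p : ℚ_[p]) ^ (-x.valuation) := by
  simp [unitPart, hx]

lemma ac_eq_iff (m : ℕ) (x y : ℚ_[p]) :
    ac p m x = ac p m y ↔
      ‖(unitPart p x : ℚ_[p]) - (unitPart p y : ℚ_[p])‖ ≤ (p : ℝ) ^ (-(m : ℤ)) := by
  rw [ac, ac, ← sub_eq_zero, ← map_sub, ← RingHom.mem_ker, PadicInt.ker_toZModPow,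
    ← PadicInt.norm_le_pow_iff_mem_span_pow]
  rw [PadicInt.norm_def]
  push_cast
  rfl

lemma unitPart_one : (unitPart p (1 : ℚ_[p]) : ℤ_[p]) = 1 := by
  apply Subtype.ext
  rw [unitPart_coe p 1 one_ne_zero, Padic.valuation_one]
  simp

/-- The key membership criterion: for `λ ≠ 0` of valuation `0` and `m ≥ 1`,
`ord u = γ` and `ac_m u = ac_m λ` iff `u` lies in the ball of radius `γ + m`
around `λ p^γ`. -/
lemma mem_iff (m : ℕ) (hm : 1 ≤ m) (γ : ℤ) (lam u : ℚ_[p])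
    (hl0 : lam ≠ 0) (hval : lam.valuation = 0) :
    (u ≠ 0 ∧ u.valuation = γ ∧ ac p m u = ac p m lam) ↔
      ‖u - lam * (p : ℚ_[p]) ^ γ‖ ≤ (p : ℝ) ^ (-(γ + (m : ℤ))) := by
  have hp1 : (1 : ℝ) < p := by exact_mod_cast hp.out.one_lt
  have hp0 : (0 : ℝ) < p := lt_trans one_pos hp1
  have hpne : (p : ℝ) ≠ 0 := ne_of_gt hp0
  have hpQ : (p : ℚ_[p]) ≠ 0 := by exact_mod_cast hp.out.ne_zero
  have hnormlam : ‖lam‖ = 1 := by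
    rw [Padic.norm_eq_zpow_neg_valuation hl0, hval]; simp
  have hul : (unitPart p lam : ℚ_[p]) = lam := by
    rw [unitPart_coe p lam hl0, hval]; simp
  have hnormc : ‖lam * (p : ℚ_[p]) ^ γ‖ = (p : ℝ) ^ (-γ) := by
    rw [norm_mul, Padic.norm_p_zpow, hnormlam, one_mul]
  constructor
  · rintro ⟨hu0, huv, hac⟩
    have h1 := (ac_eq_iff p m u lam).mp hac
    rw [unitPart_coe p u hu0, huv, hul] at h1
    have key : u - lam * (p : ℚ_[p]) ^ γ = (u * (p : ℚ_[p]) ^ (-γ) - lam) * (p : ℚ_[p]) ^ γ := by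
      rw [sub_mul, mul_assoc, ← zpow_add₀ hpQ]
      simp
    rw [key, norm_mul, Padic.norm_p_zpow]
    calc ‖u * (p : ℚ_[p]) ^ (-γ) - lam‖ * (p : ℝ) ^ (-γ)
        ≤ (p : ℝ) ^ (-(m : ℤ)) * (p : ℝ) ^ (-γ) := by
          apply mul_le_mul_of_nonneg_right h1 (le_of_lt (zpow_pos hp0 _))
      _ = (p : ℝ) ^ (-(γ + (m : ℤ))) := by rw [← zpow_add₀ hpne]; ring_nf
  · intro h
    have hlt : ‖u - lam * (p : ℚ_[p]) ^ γ‖ < ‖lam * (p : ℚ_[p]) ^ γ‖ := by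
      rw [hnormc]
      refine lt_of_le_of_lt h ?_
      apply zpow_right_strictMono₀ hp1
      omega
    have hnormu : ‖u‖ = (p : ℝ) ^ (-γ) := by
      have hne : ‖u - lam * (p : ℚ_[p]) ^ γ‖ ≠ ‖lam * (p : ℚ_[p]) ^ γ‖ := ne_of_lt hlt
      have := Padic.add_eq_max_of_ne (q := u - lam * (p : ℚ_[p]) ^ γ)
        (r := lam * (p : ℚ_[p]) ^ γ) hne
      rw [sub_add_cancel] at this
      rw [this, max_eq_right (le_of_lt hlt), hnormc]
    have hu0 : u ≠ 0 := by
      intro h0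
      rw [h0, norm_zero] at hnormu
      exact absurd hnormu.symm (ne_of_gt (zpow_pos hp0 _))
    have huv : u.valuation = γ := by
      have := (Padic.norm_eq_zpow_neg_valuation hu0).symm.trans hnormu
      have := (zpow_right_inj₀ hp0 (ne_of_gt hp1)).mp this
      omega
    refine ⟨hu0, huv, ?_⟩
    rw [ac_eq_iff, unitPart_coe p u hu0, huv, hul]
    have key : u * (p : ℚ_[p]) ^ (-γ) - lam = (u - lam * (p : ℚ_[p]) ^ γ) * (p : ℚ_[p]) ^ (-γ) := by
      rw [sub_mul, mul_assoc, ← zpow_add₀ hpQ]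
      simp
    rw [key, norm_mul, Padic.norm_p_zpow]
    calc ‖u - lam * (p : ℚ_[p]) ^ γ‖ * (p : ℝ) ^ (-(-γ))
        ≤ (p : ℝ) ^ (-(γ + (m : ℤ))) * (p : ℝ) ^ (-(-γ)) := by
          apply mul_le_mul_of_nonneg_right h (le_of_lt (zpow_pos hp0 _))
      _ = (p : ℝ) ^ (-(m : ℤ)) := by rw [← zpow_add₀ hpne]; ring_nf

end PaperCD

open PaperCD

theorem small_cell_translation_to_trivial_coset (p m : ℕ) [Fact p.Prime] (hm : 1 ≤ m)
    (γ : ℤ) (σ lam b : ℚ_[p])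
    (hlam0 : lam ≠ 0) (hlam1 : lam ≠ 1) (hval : lam.valuation = 0)
    (hr : (lam - 1).valuation < (m : ℤ))
    (hb0 : b ≠ 0) (hbv : b.valuation = γ + (lam - 1).valuation)
    (hbac : ac p m b = ac p m
      (if ac p 1 lam = 1 then (lam - 1) / (p : ℚ_[p]) ^ ((lam - 1).valuation)
       else lam - 1)) :
    {t : ℚ_[p] | t ≠ σ ∧ (t - σ).valuation = γ ∧ ac p m (t - σ) = ac p m lam} =
      {t : ℚ_[p] | t ≠ σ + b ∧ (t - (σ + b)).valuation = γ ∧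
        ac p m (t - (σ + b)) = 1} := by
  have hpf : Fact p.Prime := inferInstance
  have hp1 : (1 : ℝ) < p := by exact_mod_cast hpf.out.one_lt
  have hp0 : (0 : ℝ) < p := lt_trans one_pos hp1
  have hpne : (p : ℝ) ≠ 0 := ne_of_gt hp0
  have hpQ : (p : ℚ_[p]) ≠ 0 := by exact_mod_cast hpf.out.ne_zero
  set r : ℤ := (lam - 1).valuation with hrdef
  have hl1ne : lam - 1 ≠ 0 := sub_ne_zero.mpr hlam1
  -- 0 ≤ r
  have hr0 : 0 ≤ r := by
    have h1 : ‖lam - 1‖ ≤ 1 := by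
      have := Padic.nonarchimedean lam (-1)
      have hnl : ‖lam‖ = 1 := by rw [Padic.norm_eq_zpow_neg_valuation hlam0, hval]; simp
      simp only [norm_neg, norm_one, hnl, max_self] at this
      simpa [sub_eq_add_neg] using this
    rw [Padic.norm_eq_zpow_neg_valuation hl1ne] at h1
    by_contra hc
    push_neg at hc
    have : (1 : ℝ) < (p : ℝ) ^ (-(lam - 1).valuation) := by
      have : (p : ℝ) ^ (0 : ℤ) < (p : ℝ) ^ (-(lam - 1).valuation) := by
        apply zpow_right_strictMono₀ hp1; omega
      simpa using this
    linarith
  -- properties of Λ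
  set Lam : ℚ_[p] := if ac p 1 lam = 1 then (lam - 1) / (p : ℚ_[p]) ^ r else lam - 1 with hLdef
  have hkey : Lam ≠ 0 ∧ Lam.valuation = 0 ∧ Lam * (p : ℚ_[p]) ^ (γ + r) = (lam - 1) * (p : ℚ_[p]) ^ γ := by
    by_cases hc : ac p 1 lam = 1
    · have hL : Lam = (lam - 1) / (p : ℚ_[p]) ^ r := by rw [hLdef, if_pos hc]
      have hLne : Lam ≠ 0 := by
        rw [hL]; exact div_ne_zero hl1ne (zpow_ne_zero _ hpQ)
      have hnorm : ‖Lam‖ = 1 := by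
        rw [hL, norm_div, Padic.norm_p_zpow, Padic.norm_eq_zpow_neg_valuation hl1ne,
          ← hrdef, ← zpow_sub₀ hpne]
        simp
      have hLv : Lam.valuation = 0 := by
        rw [Padic.norm_eq_zpow_neg_valuation hLne] at hnorm
        have : (p : ℝ) ^ (-Lam.valuation) = (p : ℝ) ^ (0 : ℤ) := by simpa using hnorm
        have := (zpow_right_inj₀ hp0 (ne_of_gt hp1)).mp this
        omega
      refine ⟨hLne, hLv, ?_⟩
      rw [hL, zpow_add₀ hpQ, div_mul_eq_mul_div, mul_div_assoc, mul_div_assoc,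
        div_self (zpow_ne_zero _ hpQ), mul_one]
    · -- r = 0 in this case
      have hrz : r = 0 := by
        by_contra hrc
        have hr1 : 1 ≤ r := by omega
        apply hc
        have h1 : ‖lam - 1‖ ≤ (p : ℝ) ^ (-(1 : ℤ)) := by
          rw [Padic.norm_eq_zpow_neg_valuation hl1ne, ← hrdef]
          apply zpow_le_zpow_right₀ (le_of_lt hp1); omega
        have hone : ac p 1 (1 : ℚ_[p]) = 1 := by
          rw [ac, unitPart_one, map_one]
        rw [← hone]
        rw [ac_eq_iff]
        rw [unitPart_coe p lam hlam0, hval, unitPart_coe p 1 one_ne_zero, Padic.valuation_one]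
        simpa using h1
      have hL : Lam = lam - 1 := by rw [hLdef, if_neg hc]
      have hLv : Lam.valuation = 0 := by rw [hL, ← hrdef, hrz]
      refine ⟨by rw [hL]; exact hl1ne, hLv, by rw [hL, hrz, add_zero]⟩
  obtain ⟨hLne, hLv, hLmul⟩ := hkey
  -- the key estimate on b
  have hbkey : ‖b - (lam - 1) * (p : ℚ_[p]) ^ γ‖ ≤ (p : ℝ) ^ (-(γ + (m : ℤ))) := by
    have := (mem_iff p m hm (γ + r) Lam b hLne hLv).mp ⟨hb0, by rw [hbv], by rw [hbac]⟩
    rw [hLmul] at this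
    refine le_trans this ?_
    apply zpow_le_zpow_right₀ (le_of_lt hp1)
    omega
  -- now the set equality
  ext t
  simp only [Set.mem_setOf_eq]
  have hmem1 := mem_iff p m hm γ lam (t - σ) hlam0 hval
  have hmem2 := mem_iff p m hm γ 1 (t - (σ + b)) one_ne_zero Padic.valuation_one
  have hacone : ac p m (1 : ℚ_[p]) = 1 := by rw [ac, unitPart_one, map_one]
  rw [hacone] at hmem2
  rw [show (t ≠ σ) = (t - σ ≠ 0) by simp [sub_ne_zero],
    show (t ≠ σ + b) = (t - (σ + b) ≠ 0) by simp [sub_ne_zero]]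
  rw [show (t - σ ≠ 0 ∧ (t - σ).valuation = γ ∧ ac p m (t - σ) = ac p m lam) ↔ _ from hmem1,
    show (t - (σ + b) ≠ 0 ∧ (t - (σ + b)).valuation = γ ∧ ac p m (t - (σ + b)) = 1)
      ↔ _ from hmem2]
  have hid1 : t - (σ + b) - 1 * (p : ℚ_[p]) ^ γ
      = (t - σ - lam * (p : ℚ_[p]) ^ γ) + ((lam - 1) * (p : ℚ_[p]) ^ γ - b) := by ring
  have hid2 : t - σ - lam * (p : ℚ_[p]) ^ γ
      = (t - (σ + b) - 1 * (p : ℚ_[p]) ^ γ) + (b - (lam - 1) * (p : ℚ_[p]) ^ γ) := by ring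
  have hbn : ‖(lam - 1) * (p : ℚ_[p]) ^ γ - b‖ ≤ (p : ℝ) ^ (-(γ + (m : ℤ))) := by
    rw [← norm_neg]; simpa using hbkey
  constructor
  · intro h
    rw [hid1]
    exact le_trans (Padic.nonarchimedean _ _) (max_le h hbn)
  · intro h
    rw [hid2]
    exact le_trans (Padic.nonarchimedean _ _) (max_le h hbkey)
end

section
/- Let λ, λ' ∈ ℚ_p× with ac_m(λ) ≠ ac_m(λ') and ord λ = ord λ' = 0. Let σ, ζ ∈ ℚ_p with γ₀ := ord(σ − ζ), and suppose t ∈ ℚ_p satisfies ord(t−σ) = ord(t−ζ) ≤ γ₀ − m and ac_m(t−σ) = ac_m(λ). Then ac_m(t−ζ) = ac_m(λ), and hence ac_m(t−ζ) ≠ ac_m(λ'). -/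
open scoped Classical

open PaperCD

theorem same_ac_far_below_branching (p m : ℕ) [Fact p.Prime] (hm : 1 ≤ m)
    (σ ζ t lam lam' : ℚ_[p])
    (hlam : lam ≠ 0) (hlam' : lam' ≠ 0)
    (hvl : lam.valuation = 0) (hvl' : lam'.valuation = 0)
    (hacne : ac p m lam ≠ ac p m lam')
    (hσζ : σ ≠ ζ) (htσ : t ≠ σ) (htζ : t ≠ ζ)
    (heq : (t - σ).valuation = (t - ζ).valuation)
    (hle : (t - σ).valuation ≤ (σ - ζ).valuation - m)
    (hac : ac p m (t - σ) = ac p m lam) :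
    ac p m (t - ζ) = ac p m lam ∧ ac p m (t - ζ) ≠ ac p m lam' := by
  have hts : t - σ ≠ 0 := sub_ne_zero.mpr htσ
  have htz : t - ζ ≠ 0 := sub_ne_zero.mpr htζ
  have hsz : σ - ζ ≠ 0 := sub_ne_zero.mpr hσζ
  have hp0 : (p : ℚ_[p]) ≠ 0 := by exact_mod_cast (Fact.out : p.Prime).ne_zero
  have hp1 : (1 : ℝ) ≤ (p : ℝ) := by exact_mod_cast (Fact.out : p.Prime).one_lt.le
  have hdiff : ‖unitPart p (t - ζ) - unitPart p (t - σ)‖ ≤ (p : ℝ) ^ (-(m : ℤ)) := by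
    have h1 : ((unitPart p (t - ζ) : ℤ_[p]) : ℚ_[p])
        = (t - ζ) * (p : ℚ_[p]) ^ (-(t - ζ).valuation) := by
      simp [unitPart, htz]
    have h2 : ((unitPart p (t - σ) : ℤ_[p]) : ℚ_[p])
        = (t - σ) * (p : ℚ_[p]) ^ (-(t - σ).valuation) := by
      simp [unitPart, hts]
    rw [PadicInt.norm_def]
    push_cast
    rw [h1, h2, ← heq, ← sub_mul]
    have hss : t - ζ - (t - σ) = σ - ζ := by ring
    rw [hss, norm_mul, Padic.norm_p_zpow, Padic.norm_eq_zpow_neg_valuation hsz,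
      ← zpow_add₀ (by exact_mod_cast (Fact.out : p.Prime).ne_zero : (p:ℝ) ≠ 0)]
    apply zpow_le_zpow_right₀ hp1
    omega
  have key : ac p m (t - ζ) = ac p m (t - σ) := by
    unfold ac
    have hker : PadicInt.toZModPow m (unitPart p (t - ζ) - unitPart p (t - σ)) = 0 := by
      rw [← RingHom.mem_ker, PadicInt.ker_toZModPow]
      exact (PadicInt.norm_le_pow_iff_mem_span_pow _ m).mp hdiff
    rw [map_sub, sub_eq_zero] at hker
    exact hker
  exact ⟨key.trans hac, by rw [key, hac]; exact hacne⟩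
end
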